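/- Let η = diag(−1,1,1,1), let Λ be a real 4×4 matrix with Λᵀ·η·Λ = η (a Lorentz transformation, hence invertible), let a ∈ ℝ⁴, ε ∈ ℝ, and let p : ℝ → ℝ be continuously differentiable. Suppose ρ̄ : ℝ⁴ → ℝ is continuously differentiable and ū : ℝ⁴ → ℝ⁴ is twice continuously differentiable and they satisfy the RAV Euler equations: for all x̄ ∈ ℝ⁴ and all μ, Σ_ν ∂_ν T̄^{μν}(x̄) = ε·□ū^μ(x̄), where T̄^{μν} = (p(ρ̄) + ρ̄)·ū^μ·ū^ν + p(ρ̄)·η^{μν} and □g = −∂₀∂₀g + ∂₁∂₁g + ∂₂∂₂g + ∂₃∂₃g componentwise. Define ρ(x) = ρ̄(Λ⁻¹(x − a)) and u(x) = Λ·ū(Λ⁻¹(x − a)). Then (ρ, u) also satisfies the RAV Euler equations: for all x ∈ ℝ⁴ and all μ, Σ_ν ∂_ν T^{μν}(x) = ε·□u^μ(x), where T^{μν} = (p(ρ) + ρ)·u^μ·u^ν + p(ρ)·η^{μν}. -/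

import Mathlib

open Matrix

/-- Partial derivative in the `i`-th coordinate of a real-valued function on `ℝ⁴`. -/
noncomputable def pd (i : Fin 4) (f : (Fin 4 → ℝ) → ℝ) (x : Fin 4 → ℝ) : ℝ :=
  deriv (fun s : ℝ => f (Function.update x i s)) (x i)

/-- The D'Alembert (wave) operator `□g = −∂₀∂₀g + ∂₁∂₁g + ∂₂∂₂g + ∂₃∂₃g`. -/
noncomputable def waveOp (f : (Fin 4 → ℝ) → ℝ) (x : Fin 4 → ℝ) : ℝ :=
  -(pd 0 (pd 0 f) x) + pd 1 (pd 1 f) x + pd 2 (pd 2 f) x + pd 3 (pd 3 f) x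

/-- The Minkowski metric `η = diag(−1,1,1,1)`. -/
noncomputable def eta : Matrix (Fin 4) (Fin 4) ℝ := Matrix.diagonal ![-1, 1, 1, 1]

/-- The perfect-fluid energy–momentum tensor `T^{μν} = (p(ρ)+ρ)u^μu^ν + p(ρ)η^{μν}`
(note `η⁻¹ = η` for `η = diag(−1,1,1,1)`). -/
noncomputable def Tpf (p : ℝ → ℝ) (ρ : (Fin 4 → ℝ) → ℝ) (u : (Fin 4 → ℝ) → Fin 4 → ℝ)
    (x : Fin 4 → ℝ) (μ ν : Fin 4) : ℝ :=
  (p (ρ x) + ρ x) * u x μ * u x ν + p (ρ x) * eta μ ν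

/-- The RAV Euler equations `∂_ν T^{μν} = ε □u^μ`. -/
def RAVEuler (p : ℝ → ℝ) (ε : ℝ) (ρ : (Fin 4 → ℝ) → ℝ)
    (u : (Fin 4 → ℝ) → Fin 4 → ℝ) : Prop :=
  ∀ (x : Fin 4 → ℝ) (μ : Fin 4),
    ∑ ν : Fin 4, pd ν (fun y => Tpf p ρ u y μ ν) x = ε * waveOp (fun y => u y μ) x

/-! ### Auxiliary lemmas on `pd` -/

lemma update_hasDerivAt (x : Fin 4 → ℝ) (i : Fin 4) (s : ℝ) :
    HasDerivAt (fun t : ℝ => Function.update x i t) (Pi.single i 1) s := by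
  have h : (fun t : ℝ => Function.update x i t)
      = fun t => x + (t - x i) • (Pi.single i 1 : Fin 4 → ℝ) := by
    funext t
    ext j
    by_cases hj : j = i
    · subst hj; simp
    · simp [Function.update_of_ne hj, Pi.single_apply, hj]
  rw [h]
  have h1 : HasDerivAt (fun t : ℝ => t - x i) 1 s := (hasDerivAt_id s).sub_const (x i)
  have h2 : HasDerivAt (fun t : ℝ => (t - x i) • (Pi.single i 1 : Fin 4 → ℝ))
      ((1:ℝ) • (Pi.single i 1 : Fin 4 → ℝ)) s := h1.smul_const _
  simpa using h2.const_add x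

lemma pd_hasDerivAt {f : (Fin 4 → ℝ) → ℝ} {f' : (Fin 4 → ℝ) →L[ℝ] ℝ} {x : Fin 4 → ℝ}
    (hf : HasFDerivAt f f' x) (i : Fin 4) :
    HasDerivAt (fun s : ℝ => f (Function.update x i s)) (f' (Pi.single i 1)) (x i) := by
  have hc := update_hasDerivAt x i (x i)
  have hx : Function.update x i (x i) = x := Function.update_eq_self i x
  have hf' : HasFDerivAt f f' (Function.update x i (x i)) := by rw [hx]; exact hf
  exact hf'.comp_hasDerivAt (x i) hc

lemma pd_eq_fderiv {f : (Fin 4 → ℝ) → ℝ} {x : Fin 4 → ℝ}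
    (hf : DifferentiableAt ℝ f x) (i : Fin 4) :
    pd i f x = fderiv ℝ f x (Pi.single i 1) :=
  (pd_hasDerivAt hf.hasFDerivAt i).deriv

lemma fderiv_apply_eq_sum {f : (Fin 4 → ℝ) → ℝ} {x : Fin 4 → ℝ}
    (hf : DifferentiableAt ℝ f x) (v : Fin 4 → ℝ) :
    fderiv ℝ f x v = ∑ γ : Fin 4, v γ * pd γ f x := by
  have hv : v = ∑ γ : Fin 4, v γ • (Pi.single γ 1 : Fin 4 → ℝ) := by
    ext j; simp [Pi.single_apply]
  calc fderiv ℝ f x v = fderiv ℝ f x (∑ γ : Fin 4, v γ • (Pi.single γ 1 : Fin 4 → ℝ)) := by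
        rw [← hv]
    _ = ∑ γ : Fin 4, v γ * fderiv ℝ f x (Pi.single γ 1) := by
        rw [map_sum]; simp [smul_eq_mul]
    _ = ∑ γ : Fin 4, v γ * pd γ f x := by
        simp [pd_eq_fderiv hf]

lemma pd_const_mul (c : ℝ) (g : (Fin 4 → ℝ) → ℝ) (i : Fin 4) (x : Fin 4 → ℝ) :
    pd i (fun y => c * g y) x = c * pd i g x := by
  simp [pd, deriv_const_mul_field]

lemma pd_sum {ι : Type*} (s : Finset ι) (g : ι → (Fin 4 → ℝ) → ℝ) (i : Fin 4) (x : Fin 4 → ℝ)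
    (hg : ∀ γ ∈ s, DifferentiableAt ℝ (g γ) x) :
    pd i (fun y => ∑ γ ∈ s, g γ y) x = ∑ γ ∈ s, pd i (g γ) x := by
  have h : HasDerivAt (fun t : ℝ => ∑ γ ∈ s, g γ (Function.update x i t))
      (∑ γ ∈ s, fderiv ℝ (g γ) x (Pi.single i 1)) (x i) :=
    HasDerivAt.fun_sum fun γ hγ => pd_hasDerivAt (hg γ hγ).hasFDerivAt i
  have : pd i (fun y => ∑ γ ∈ s, g γ y) x
      = ∑ γ ∈ s, fderiv ℝ (g γ) x (Pi.single i 1) := h.deriv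
  rw [this]
  exact Finset.sum_congr rfl fun γ hγ => (pd_eq_fderiv (hg γ hγ) i).symm

/-! ### The affine change of variables -/

lemma contDiff_affine (B : Matrix (Fin 4) (Fin 4) ℝ) (a : Fin 4 → ℝ) (n : ℕ∞) :
    ContDiff ℝ n (fun y : Fin 4 → ℝ => B.mulVec (y - a)) := by
  have : (fun y : Fin 4 → ℝ => B.mulVec (y - a))
      = (Matrix.mulVecLin B).toContinuousLinearMap ∘ (fun y => y - a) := by
    funext y; simp
  rw [this]
  exact ((Matrix.mulVecLin B).toContinuousLinearMap.contDiff).comp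
    (contDiff_id.sub contDiff_const)

lemma affine_hasFDerivAt (B : Matrix (Fin 4) (Fin 4) ℝ) (a x : Fin 4 → ℝ) :
    HasFDerivAt (fun y : Fin 4 → ℝ => B.mulVec (y - a))
      (Matrix.mulVecLin B).toContinuousLinearMap x := by
  have h : (fun y : Fin 4 → ℝ => B.mulVec (y - a))
      = fun y => (Matrix.mulVecLin B).toContinuousLinearMap y - B.mulVec a := by
    funext y; simp [Matrix.mulVec_sub]
  rw [h]
  exact ((Matrix.mulVecLin B).toContinuousLinearMap.hasFDerivAt).sub_const _

lemma pd_comp (B : Matrix (Fin 4) (Fin 4) ℝ) (a : Fin 4 → ℝ) {f : (Fin 4 → ℝ) → ℝ}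
    (x : Fin 4 → ℝ) (hf : DifferentiableAt ℝ f (B.mulVec (x - a))) (ν : Fin 4) :
    pd ν (fun y => f (B.mulVec (y - a))) x
      = ∑ γ : Fin 4, B γ ν * pd γ f (B.mulVec (x - a)) := by
  have hA := affine_hasFDerivAt B a x
  have hcomp : HasFDerivAt (fun y => f (B.mulVec (y - a)))
      ((fderiv ℝ f (B.mulVec (x - a))).comp (Matrix.mulVecLin B).toContinuousLinearMap) x :=
    hf.hasFDerivAt.comp x hA
  rw [pd_eq_fderiv hcomp.differentiableAt ν, hcomp.fderiv]
  have hsv : B.mulVec (Pi.single ν 1) = fun γ => B γ ν := by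
    funext γ; simp [Matrix.mulVec_single]
  calc (fderiv ℝ f (B.mulVec (x - a))) (B.mulVec (Pi.single ν 1))
      = ∑ γ : Fin 4, (B.mulVec (Pi.single ν 1)) γ * pd γ f (B.mulVec (x - a)) :=
        fderiv_apply_eq_sum hf _
    _ = ∑ γ : Fin 4, B γ ν * pd γ f (B.mulVec (x - a)) := by rw [hsv]

lemma contDiff_pd {f : (Fin 4 → ℝ) → ℝ} (hf : ContDiff ℝ 2 f) (γ : Fin 4) :
    ContDiff ℝ 1 (pd γ f) := by
  have h : pd γ f = fun x => fderiv ℝ f x (Pi.single γ 1) :=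
    funext fun x => pd_eq_fderiv (hf.differentiable (by norm_num) x) γ
  rw [h]
  exact (hf.fderiv_right (by norm_num)).clm_apply contDiff_const

/-! ### Facts about `eta` and Lorentz matrices -/

lemma eta_mul_eta : eta * eta = 1 := by
  rw [eta, Matrix.diagonal_mul_diagonal]
  have h2 : (fun i => (![-1, 1, 1, 1] : Fin 4 → ℝ) i * ![-1, 1, 1, 1] i) = 1 := by
    funext i; fin_cases i <;> norm_num
  rw [h2]; exact Matrix.diagonal_one

lemma eta_transpose : etaᵀ = eta := Matrix.diagonal_transpose _

lemma mul_eta_mul_transpose_apply (M N : Matrix (Fin 4) (Fin 4) ℝ) (γ δ : Fin 4) :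
    (M * eta * Nᵀ) γ δ = ∑ ν : Fin 4, M γ ν * eta ν ν * N δ ν := by
  have h : ∀ ν, (M * eta) γ ν = M γ ν * eta ν ν := fun ν => by
    rw [eta, Matrix.mul_diagonal, Matrix.diagonal_apply_eq]
  rw [Matrix.mul_apply]
  exact Finset.sum_congr rfl fun ν _ => by rw [h, Matrix.transpose_apply]

lemma lorentz_left_inv (Λ : Matrix (Fin 4) (Fin 4) ℝ) (hΛ : Λᵀ * eta * Λ = eta) :
    (eta * Λᵀ * eta) * Λ = 1 := by
  calc (eta * Λᵀ * eta) * Λ = eta * (Λᵀ * eta * Λ) := by simp only [Matrix.mul_assoc]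
    _ = eta * eta := by rw [hΛ]
    _ = 1 := eta_mul_eta

lemma lorentz_inv_eq (Λ : Matrix (Fin 4) (Fin 4) ℝ) (hΛ : Λᵀ * eta * Λ = eta) :
    Λ⁻¹ = eta * Λᵀ * eta := Matrix.inv_eq_left_inv (lorentz_left_inv Λ hΛ)

lemma lorentz_inv_mul (Λ : Matrix (Fin 4) (Fin 4) ℝ) (hΛ : Λᵀ * eta * Λ = eta) :
    Λ⁻¹ * Λ = 1 := by rw [lorentz_inv_eq Λ hΛ]; exact lorentz_left_inv Λ hΛ

lemma lorentz_mul_eta_mul_t (Λ : Matrix (Fin 4) (Fin 4) ℝ) (hΛ : Λᵀ * eta * Λ = eta) :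
    Λ * eta * Λᵀ = eta := by
  have h1 : Λ * (eta * Λᵀ * eta) = 1 := by
    rw [← mul_eq_one_comm]; exact lorentz_left_inv Λ hΛ
  calc Λ * eta * Λᵀ = Λ * eta * Λᵀ * (eta * eta) := by rw [eta_mul_eta, Matrix.mul_one]
    _ = (Λ * (eta * Λᵀ * eta)) * eta := by simp only [Matrix.mul_assoc]
    _ = eta := by rw [h1, Matrix.one_mul]

lemma lorentz_inv_eta_inv_t (Λ : Matrix (Fin 4) (Fin 4) ℝ) (hΛ : Λᵀ * eta * Λ = eta) :
    Λ⁻¹ * eta * (Λ⁻¹)ᵀ = eta := by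
  rw [lorentz_inv_eq Λ hΛ]
  simp only [Matrix.transpose_mul, eta_transpose, Matrix.transpose_transpose]
  calc eta * Λᵀ * eta * eta * (eta * (Λ * eta))
      = eta * (Λᵀ * ((eta * eta) * (eta * Λ)) * eta) := by simp only [Matrix.mul_assoc]
    _ = eta * (Λᵀ * eta * Λ * eta) := by
        rw [eta_mul_eta, Matrix.one_mul]; simp only [Matrix.mul_assoc]
    _ = eta * (eta * eta) := by rw [hΛ, eta_mul_eta, Matrix.mul_one]
    _ = eta := by rw [eta_mul_eta, Matrix.mul_one]

/-! ### Invariance of the wave operator -/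

lemma waveOp_eq_sum (f : (Fin 4 → ℝ) → ℝ) (x : Fin 4 → ℝ) :
    waveOp f x = ∑ ν : Fin 4, eta ν ν * pd ν (pd ν f) x := by
  simp [waveOp, Fin.sum_univ_four, eta, Matrix.diagonal_apply_eq]

lemma pd_pd_comp (B : Matrix (Fin 4) (Fin 4) ℝ) (a : Fin 4 → ℝ) {f : (Fin 4 → ℝ) → ℝ}
    (hf : ContDiff ℝ 2 f) (x : Fin 4 → ℝ) (ν : Fin 4) :
    pd ν (pd ν (fun y => f (B.mulVec (y - a)))) x
      = ∑ γ : Fin 4, ∑ δ : Fin 4,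
          B γ ν * (B δ ν * pd δ (pd γ f) (B.mulVec (x - a))) := by
  have hfd : Differentiable ℝ f := hf.differentiable (by norm_num)
  have hstep1 : pd ν (fun y => f (B.mulVec (y - a)))
      = fun y => ∑ γ : Fin 4, B γ ν * pd γ f (B.mulVec (y - a)) := by
    funext y
    exact pd_comp B a y (hfd _) ν
  rw [hstep1]
  have hdiff : ∀ γ : Fin 4, ∀ y, DifferentiableAt ℝ
      (fun y => B γ ν * pd γ f (B.mulVec (y - a))) y := by
    intro γ y
    have h1 : Differentiable ℝ (fun y : Fin 4 → ℝ => pd γ f (B.mulVec (y - a))) :=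
      ((contDiff_pd hf γ).comp (contDiff_affine B a 1)).differentiable one_ne_zero
    exact (h1 y).const_mul _
  rw [pd_sum Finset.univ _ ν x (fun γ _ => hdiff γ x)]
  refine Finset.sum_congr rfl fun γ _ => ?_
  rw [pd_const_mul]
  rw [pd_comp B a x (((contDiff_pd hf γ).differentiable one_ne_zero) _) ν, Finset.mul_sum]

lemma waveOp_comp (B : Matrix (Fin 4) (Fin 4) ℝ) (a : Fin 4 → ℝ) {f : (Fin 4 → ℝ) → ℝ}
    (hf : ContDiff ℝ 2 f) (hB : B * eta * Bᵀ = eta) (x : Fin 4 → ℝ) :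
    waveOp (fun y => f (B.mulVec (y - a))) x = waveOp f (B.mulVec (x - a)) := by
  rw [waveOp_eq_sum, waveOp_eq_sum]
  simp_rw [pd_pd_comp B a hf x]
  set D : Fin 4 → Fin 4 → ℝ := fun δ γ => pd δ (pd γ f) (B.mulVec (x - a)) with hD
  have key : ∑ ν : Fin 4, eta ν ν * ∑ γ : Fin 4, ∑ δ : Fin 4, B γ ν * (B δ ν * D δ γ)
      = ∑ γ : Fin 4, ∑ δ : Fin 4, (B * eta * Bᵀ) γ δ * D δ γ := by
    simp_rw [Finset.mul_sum, mul_eta_mul_transpose_apply, Finset.sum_mul]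
    rw [Finset.sum_comm]
    refine Finset.sum_congr rfl fun γ _ => ?_
    rw [Finset.sum_comm]
    refine Finset.sum_congr rfl fun δ _ => Finset.sum_congr rfl fun ν _ => by ring
  rw [key, hB]
  have diag : ∀ γ δ : Fin 4, eta γ δ = if γ = δ then eta γ γ else 0 := by
    intro γ δ
    by_cases h : γ = δ
    · subst h; simp
    · simp [h, eta, Matrix.diagonal_apply_ne _ h]
  refine Finset.sum_congr rfl fun γ _ => ?_
  calc ∑ δ : Fin 4, eta γ δ * D δ γ
      = ∑ δ : Fin 4, (if γ = δ then eta γ γ * D δ γ else 0) := by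
        refine Finset.sum_congr rfl fun δ _ => ?_
        rw [diag γ δ]
        by_cases h : γ = δ <;> simp [h]
    _ = eta γ γ * D γ γ := by rw [Finset.sum_ite_eq]; simp

lemma waveOp_sum (c : Fin 4 → ℝ) (g : Fin 4 → (Fin 4 → ℝ) → ℝ)
    (hg : ∀ α, ContDiff ℝ 2 (g α)) (x : Fin 4 → ℝ) :
    waveOp (fun y => ∑ α : Fin 4, c α * g α y) x
      = ∑ α : Fin 4, c α * waveOp (g α) x := by
  have h1 : ∀ ν : Fin 4, pd ν (fun y => ∑ α : Fin 4, c α * g α y)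
      = fun y => ∑ α : Fin 4, c α * pd ν (g α) y := by
    intro ν; funext y
    rw [pd_sum Finset.univ (fun α y => c α * g α y) ν y
      (fun α _ => (((hg α).differentiable (by norm_num)) y).const_mul _)]
    exact Finset.sum_congr rfl fun α _ => pd_const_mul _ _ _ _
  have h2 : ∀ ν : Fin 4, pd ν (pd ν (fun y => ∑ α : Fin 4, c α * g α y)) x
      = ∑ α : Fin 4, c α * pd ν (pd ν (g α)) x := by
    intro ν
    rw [h1 ν]
    rw [pd_sum Finset.univ (fun α y => c α * pd ν (g α) y) ν x
      (fun α _ => ((((contDiff_pd (hg α) ν).differentiable one_ne_zero)) x).const_mul _)]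
    exact Finset.sum_congr rfl fun α _ => pd_const_mul _ _ _ _
  simp only [waveOp]
  rw [h2 0, h2 1, h2 2, h2 3]
  simp only [Fin.sum_univ_four]
  ring

/-! ### Sum rearrangement for the divergence -/

lemma quad_swap (f : Fin 4 → Fin 4 → Fin 4 → Fin 4 → ℝ) :
    ∑ ν : Fin 4, ∑ γ : Fin 4, ∑ α : Fin 4, ∑ β : Fin 4, f ν γ α β
      = ∑ α : Fin 4, ∑ β : Fin 4, ∑ γ : Fin 4, ∑ ν : Fin 4, f ν γ α β := by
  rw [Finset.sum_comm]
  refine (Finset.sum_congr rfl fun γ _ => Finset.sum_comm).trans ?_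
  rw [Finset.sum_comm]
  refine (Finset.sum_congr rfl fun α _ => Finset.sum_congr rfl fun γ _ => Finset.sum_comm).trans ?_
  exact Finset.sum_congr rfl fun α _ => Finset.sum_comm

lemma div_rearrange (B L : Matrix (Fin 4) (Fin 4) ℝ) (hBL : B * L = 1)
    (D : Fin 4 → Fin 4 → Fin 4 → ℝ) (c : Fin 4 → ℝ) :
    ∑ ν : Fin 4, ∑ γ : Fin 4, B γ ν * (∑ α : Fin 4, c α * (∑ β : Fin 4, L ν β * D γ α β))
      = ∑ α : Fin 4, c α * (∑ β : Fin 4, D β α β) := by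
  simp_rw [Finset.mul_sum]
  rw [quad_swap (fun ν γ α β => B γ ν * (c α * (L ν β * D γ α β)))]
  refine Finset.sum_congr rfl fun α _ => Finset.sum_congr rfl fun β _ => ?_
  have h1 : ∀ γ : Fin 4, ∑ ν : Fin 4, B γ ν * (c α * (L ν β * D γ α β))
      = (B * L) γ β * (c α * D γ α β) := by
    intro γ
    rw [Matrix.mul_apply, Finset.sum_mul]
    exact Finset.sum_congr rfl fun ν _ => by ring
  simp_rw [h1, hBL]
  have h2 : ∀ γ : Fin 4, (1 : Matrix (Fin 4) (Fin 4) ℝ) γ β * (c α * D γ α β)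
      = if γ = β then c α * D γ α β else 0 := by
    intro γ
    rw [Matrix.one_apply]
    by_cases h : γ = β <;> simp [h]
  simp_rw [h2]
  rw [Finset.sum_ite_eq' Finset.univ β (fun γ => c α * D γ α β)]
  simp

/-! ### Main theorem -/

/-- Lorentz invariance of the RAV Euler equations: if `(ρ̄, ū)` solves the RAV Euler
equations, then so does the Lorentz-transformed pair
`ρ(x) = ρ̄(Λ⁻¹(x−a))`, `u(x) = Λ·ū(Λ⁻¹(x−a))`. -/
theorem RAVEuler_lorentz_invariant (Λ : Matrix (Fin 4) (Fin 4) ℝ)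
    (hΛ : Λᵀ * eta * Λ = eta) (a : Fin 4 → ℝ) (ε : ℝ)
    (p : ℝ → ℝ) (hp : ContDiff ℝ 1 p)
    (ρb : (Fin 4 → ℝ) → ℝ) (hρb : ContDiff ℝ 1 ρb)
    (ub : (Fin 4 → ℝ) → Fin 4 → ℝ) (hub : ContDiff ℝ 2 ub)
    (hsol : RAVEuler p ε ρb ub) :
    RAVEuler p ε (fun x => ρb (Λ⁻¹.mulVec (x - a)))
      (fun x => Λ.mulVec (ub (Λ⁻¹.mulVec (x - a)))) := by
  have hBΛ : Λ⁻¹ * Λ = 1 := lorentz_inv_mul Λ hΛ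
  have hΛη : Λ * eta * Λᵀ = eta := lorentz_mul_eta_mul_t Λ hΛ
  have hBη : Λ⁻¹ * eta * (Λ⁻¹)ᵀ = eta := lorentz_inv_eta_inv_t Λ hΛ
  -- entry form of `Λ * eta * Λᵀ = eta`
  have hent : ∀ μ ν : Fin 4,
      Λ μ 0 * -1 * Λ ν 0 + Λ μ 1 * 1 * Λ ν 1 + Λ μ 2 * 1 * Λ ν 2 + Λ μ 3 * 1 * Λ ν 3
        = eta μ ν := by
    intro μ ν
    have h := congrFun (congrFun hΛη μ) ν
    rw [mul_eta_mul_transpose_apply] at h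
    simpa [Fin.sum_univ_four, eta, Matrix.diagonal_apply_eq] using h
  -- smoothness of constituents
  have hubα : ∀ α : Fin 4, ContDiff ℝ 2 fun z => ub z α := fun α => contDiff_pi.mp hub α
  have hTb : ∀ α β : Fin 4, ContDiff ℝ 1 fun z => Tpf p ρb ub z α β := by
    intro α β
    have hq : ContDiff ℝ 1 fun z => p (ρb z) := hp.comp hρb
    unfold Tpf
    exact (((hq.add hρb).mul ((hubα α).of_le (by norm_num))).mul
      ((hubα β).of_le (by norm_num))).add (hq.mul contDiff_const)
  have hH : ∀ (α ν : Fin 4), ContDiff ℝ 1 fun z => ∑ β : Fin 4, Λ ν β * Tpf p ρb ub z α β :=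
    fun α ν => ContDiff.sum fun β _ => contDiff_const.mul (hTb α β)
  -- the transformed tensor expressed through the original one
  set F : Fin 4 → Fin 4 → (Fin 4 → ℝ) → ℝ :=
    fun μ ν z => ∑ α : Fin 4, Λ μ α * ∑ β : Fin 4, Λ ν β * Tpf p ρb ub z α β with hFdef
  have hF : ∀ μ ν, ContDiff ℝ 1 (F μ ν) :=
    fun μ ν => ContDiff.sum fun α _ => contDiff_const.mul (hH α ν)
  have hTid : ∀ (y : Fin 4 → ℝ) (μ ν : Fin 4),
      Tpf p (fun x => ρb (Λ⁻¹.mulVec (x - a)))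
        (fun x => Λ.mulVec (ub (Λ⁻¹.mulVec (x - a)))) y μ ν
        = F μ ν (Λ⁻¹.mulVec (y - a)) := by
    intro y μ ν
    simp only [Tpf, hFdef, Matrix.mulVec, dotProduct, Fin.sum_univ_four]
    have he00 : eta 0 0 = (-1:ℝ) := by rw [eta]; simp
    have he01 : eta 0 1 = (0:ℝ) := by rw [eta]; exact Matrix.diagonal_apply_ne _ (by decide)
    have he02 : eta 0 2 = (0:ℝ) := by rw [eta]; exact Matrix.diagonal_apply_ne _ (by decide)
    have he03 : eta 0 3 = (0:ℝ) := by rw [eta]; exact Matrix.diagonal_apply_ne _ (by decide)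
    have he10 : eta 1 0 = (0:ℝ) := by rw [eta]; exact Matrix.diagonal_apply_ne _ (by decide)
    have he11 : eta 1 1 = (1:ℝ) := by rw [eta]; simp
    have he12 : eta 1 2 = (0:ℝ) := by rw [eta]; exact Matrix.diagonal_apply_ne _ (by decide)
    have he13 : eta 1 3 = (0:ℝ) := by rw [eta]; exact Matrix.diagonal_apply_ne _ (by decide)
    have he20 : eta 2 0 = (0:ℝ) := by rw [eta]; exact Matrix.diagonal_apply_ne _ (by decide)
    have he21 : eta 2 1 = (0:ℝ) := by rw [eta]; exact Matrix.diagonal_apply_ne _ (by decide)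
    have he22 : eta 2 2 = (1:ℝ) := by rw [eta]; simp
    have he23 : eta 2 3 = (0:ℝ) := by rw [eta]; exact Matrix.diagonal_apply_ne _ (by decide)
    have he30 : eta 3 0 = (0:ℝ) := by rw [eta]; exact Matrix.diagonal_apply_ne _ (by decide)
    have he31 : eta 3 1 = (0:ℝ) := by rw [eta]; exact Matrix.diagonal_apply_ne _ (by decide)
    have he32 : eta 3 2 = (0:ℝ) := by rw [eta]; exact Matrix.diagonal_apply_ne _ (by decide)
    have he33 : eta 3 3 = (1:ℝ) := by rw [eta]; simp
    simp only [he00, he01, he02, he03, he10, he11, he12, he13, he20, he21, he22, he23, he30, he31, he32, he33]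
    linear_combination (p (ρb (Λ⁻¹.mulVec (y - a)))) * (hent μ ν).symm
  intro x μ
  -- left-hand side
  have lhs_eq : ∑ ν : Fin 4, pd ν (fun y =>
      Tpf p (fun x => ρb (Λ⁻¹.mulVec (x - a)))
        (fun x => Λ.mulVec (ub (Λ⁻¹.mulVec (x - a)))) y μ ν) x
      = ∑ α : Fin 4, Λ μ α * (ε * waveOp (fun z => ub z α) (Λ⁻¹.mulVec (x - a))) := by
    have step1 : ∀ ν : Fin 4, pd ν (fun y =>
        Tpf p (fun x => ρb (Λ⁻¹.mulVec (x - a)))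
          (fun x => Λ.mulVec (ub (Λ⁻¹.mulVec (x - a)))) y μ ν) x
        = ∑ γ : Fin 4, Λ⁻¹ γ ν * pd γ (F μ ν) (Λ⁻¹.mulVec (x - a)) := by
      intro ν
      have hfun : (fun y => Tpf p (fun x => ρb (Λ⁻¹.mulVec (x - a)))
          (fun x => Λ.mulVec (ub (Λ⁻¹.mulVec (x - a)))) y μ ν)
          = fun y => F μ ν (Λ⁻¹.mulVec (y - a)) := funext fun y => hTid y μ ν
      rw [hfun]
      exact pd_comp Λ⁻¹ a x ((hF μ ν).differentiable one_ne_zero _) ν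
    have step2 : ∀ (γ ν : Fin 4) (z : Fin 4 → ℝ), pd γ (F μ ν) z
        = ∑ α : Fin 4, Λ μ α * (∑ β : Fin 4, Λ ν β * pd γ (fun w => Tpf p ρb ub w α β) z) := by
      intro γ ν z
      have e1 : pd γ (F μ ν) z
          = ∑ α : Fin 4, pd γ (fun w => Λ μ α * ∑ β : Fin 4, Λ ν β * Tpf p ρb ub w α β) z :=
        pd_sum Finset.univ _ γ z
          (fun α _ => (((hH α ν).differentiable one_ne_zero) z).const_mul _)
      rw [e1]
      refine Finset.sum_congr rfl fun α _ => ?_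
      rw [pd_const_mul]
      congr 1
      have e2 : pd γ (fun w => ∑ β : Fin 4, Λ ν β * Tpf p ρb ub w α β) z
          = ∑ β : Fin 4, pd γ (fun w => Λ ν β * Tpf p ρb ub w α β) z :=
        pd_sum Finset.univ _ γ z
          (fun β _ => (((hTb α β).differentiable one_ne_zero) z).const_mul _)
      rw [e2]
      exact Finset.sum_congr rfl fun β _ => pd_const_mul _ _ _ _
    calc ∑ ν : Fin 4, pd ν (fun y =>
        Tpf p (fun x => ρb (Λ⁻¹.mulVec (x - a)))
          (fun x => Λ.mulVec (ub (Λ⁻¹.mulVec (x - a)))) y μ ν) x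
        = ∑ ν : Fin 4, ∑ γ : Fin 4, Λ⁻¹ γ ν *
            (∑ α : Fin 4, Λ μ α * (∑ β : Fin 4, Λ ν β *
              pd γ (fun w => Tpf p ρb ub w α β) (Λ⁻¹.mulVec (x - a)))) := by
          refine Finset.sum_congr rfl fun ν _ => ?_
          rw [step1 ν]
          exact Finset.sum_congr rfl fun γ _ => by rw [step2 γ ν]
      _ = ∑ α : Fin 4, Λ μ α * (∑ β : Fin 4,
            pd β (fun w => Tpf p ρb ub w α β) (Λ⁻¹.mulVec (x - a))) :=
          div_rearrange Λ⁻¹ Λ hBΛ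
            (fun γ α β => pd γ (fun w => Tpf p ρb ub w α β) (Λ⁻¹.mulVec (x - a)))
            (fun α => Λ μ α)
      _ = ∑ α : Fin 4, Λ μ α * (ε * waveOp (fun z => ub z α) (Λ⁻¹.mulVec (x - a))) := by
          refine Finset.sum_congr rfl fun α _ => ?_
          rw [hsol (Λ⁻¹.mulVec (x - a)) α]
  rw [lhs_eq]
  -- right-hand side
  have hufun : (fun y => (fun x => Λ.mulVec (ub (Λ⁻¹.mulVec (x - a)))) y μ)
      = fun y => ∑ α : Fin 4, Λ μ α * (fun w => ub (Λ⁻¹.mulVec (w - a)) α) y := by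
    funext y
    simp [Matrix.mulVec, dotProduct]
  rw [hufun]
  have hgα : ∀ α : Fin 4, ContDiff ℝ 2 fun w : Fin 4 → ℝ => ub (Λ⁻¹.mulVec (w - a)) α :=
    fun α => (hubα α).comp (contDiff_affine Λ⁻¹ a 2)
  rw [waveOp_sum (fun α => Λ μ α) _ hgα x]
  have hwave : ∀ α : Fin 4, waveOp (fun w : Fin 4 → ℝ => ub (Λ⁻¹.mulVec (w - a)) α) x
      = waveOp (fun z => ub z α) (Λ⁻¹.mulVec (x - a)) :=
    fun α => waveOp_comp Λ⁻¹ a (hubα α) hBη x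
  simp_rw [hwave]
  rw [Finset.mul_sum]
  exact Finset.sum_congr rfl fun α _ => by ring
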